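/- Let E_{x,y} be the space of continuous paths γ : [0,1] → |Δⁿ| with γ(0) = x, γ(1) = y, and for all t > 0, γ(t) lies in the stratum {s ∈ |Δⁿ| : max{i : sᵢ ≠ 0} = j}, where x lies in stratum i, y lies in stratum j, and i ≤ j. Then the formula h(γ, s)(t) = (1−s)γ(t) + s(1−t)x + s t y defines a contracting homotopy on E_{x,y}; in particular E_{x,y} is contractible. -/

import Mathlib

open unitInterval

private lemma tpos {t : unitInterval} (h : t ≠ 0) : 0 < (t : ℝ) :=
  lt_of_le_of_ne t.2.1 (fun e => h (Subtype.ext e.symm))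

private lemma comb_mem {n : ℕ} {a b : ℝ} {u v : Fin (n+1) → ℝ}
    (hu : u ∈ stdSimplex ℝ (Fin (n+1))) (hv : v ∈ stdSimplex ℝ (Fin (n+1)))
    (ha : 0 ≤ a) (hb : 0 ≤ b) (hab : a + b = 1) :
    (fun k => a * u k + b * v k) ∈ stdSimplex ℝ (Fin (n+1)) := by
  simpa [Pi.add_def, Pi.smul_apply, smul_eq_mul] using
    convex_stdSimplex ℝ (Fin (n+1)) hu hv ha hb hab

/-- The three-term convex combination lies in the standard simplex. -/
private lemma tri_mem {n : ℕ} {s t : ℝ} (hs0 : 0 ≤ s) (hs1 : s ≤ 1)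
    (ht0 : 0 ≤ t) (ht1 : t ≤ 1) {g : Fin (n+1) → ℝ}
    (hg : g ∈ stdSimplex ℝ (Fin (n+1)))
    (x y : stdSimplex ℝ (Fin (n+1))) :
    (fun k => (1 - s) * g k + s * (1 - t) * (x : Fin (n+1) → ℝ) k
        + s * t * (y : Fin (n+1) → ℝ) k) ∈ stdSimplex ℝ (Fin (n+1)) := by
  have hmid : (fun k => (1 - t) * (x : Fin (n+1) → ℝ) k + t * (y : Fin (n+1) → ℝ) k)
      ∈ stdSimplex ℝ (Fin (n+1)) :=
    comb_mem x.2 y.2 (by linarith) ht0 (by ring)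
  have h2 := comb_mem (a := 1 - s) (b := s) hg hmid (by linarith) hs0 (by ring)
  have heq : (fun k => (1 - s) * g k
        + s * ((1 - t) * (x : Fin (n+1) → ℝ) k + t * (y : Fin (n+1) → ℝ) k))
      = (fun k => (1 - s) * g k + s * (1 - t) * (x : Fin (n+1) → ℝ) k
        + s * t * (y : Fin (n+1) → ℝ) k) := funext fun k => by ring
  rwa [heq] at h2

/-- Underlying continuous map of the homotopy, into the simplex. -/
private def Phi (n : ℕ) (x y : stdSimplex ℝ (Fin (n+1))) :
    C((unitInterval × C(unitInterval, stdSimplex ℝ (Fin (n+1)))) × unitInterval,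
      stdSimplex ℝ (Fin (n+1))) where
  toFun p := ⟨fun k => (1 - (p.1.1 : ℝ)) * (p.1.2 p.2 : Fin (n+1) → ℝ) k
      + (p.1.1 : ℝ) * (1 - (p.2 : ℝ)) * (x : Fin (n+1) → ℝ) k
      + (p.1.1 : ℝ) * (p.2 : ℝ) * (y : Fin (n+1) → ℝ) k,
    tri_mem p.1.1.2.1 p.1.1.2.2 p.2.2.1 p.2.2.2 (p.1.2 p.2).2 x y⟩
  continuous_toFun := by
    apply Continuous.subtype_mk
    apply continuous_pi
    intro k
    have hev : Continuous fun p :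
        (unitInterval × C(unitInterval, stdSimplex ℝ (Fin (n+1)))) × unitInterval =>
        ((p.1.2 p.2 : Fin (n+1) → ℝ) k) := by
      have : Continuous fun p :
          (unitInterval × C(unitInterval, stdSimplex ℝ (Fin (n+1)))) × unitInterval =>
          (p.1.2 p.2) :=
        continuous_eval.comp ((continuous_snd.comp continuous_fst).prodMk continuous_snd)
      exact (continuous_apply k).comp (continuous_subtype_val.comp this)
    have hs : Continuous fun p :
        (unitInterval × C(unitInterval, stdSimplex ℝ (Fin (n+1)))) × unitInterval =>
        (p.1.1 : ℝ) := continuous_subtype_val.comp (continuous_fst.comp continuous_fst)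
    have ht : Continuous fun p :
        (unitInterval × C(unitInterval, stdSimplex ℝ (Fin (n+1)))) × unitInterval =>
        (p.2 : ℝ) := continuous_subtype_val.comp continuous_snd
    fun_prop

example (n : ℕ) (x y : stdSimplex ℝ (Fin (n+1))) : True := trivial

/-- The three-term convex combination stays in stratum `j` for `t > 0`. -/
private lemma tri_strat {n : ℕ} {i j : Fin (n+1)} (hij : i ≤ j)
    {x y : stdSimplex ℝ (Fin (n+1))}
    (hx2 : ∀ k, i < k → (x : Fin (n+1) → ℝ) k = 0)
    (hy1 : (y : Fin (n+1) → ℝ) j ≠ 0)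
    (hy2 : ∀ k, j < k → (y : Fin (n+1) → ℝ) k = 0)
    {s t : ℝ} (hs0 : 0 ≤ s) (hs1 : s ≤ 1) (ht0 : 0 < t) (ht1 : t ≤ 1)
    {g : Fin (n+1) → ℝ} (hg : g ∈ stdSimplex ℝ (Fin (n+1)))
    (hg1 : g j ≠ 0) (hg2 : ∀ k, j < k → g k = 0) :
    ((1 - s) * g j + s * (1 - t) * (x : Fin (n+1) → ℝ) j
        + s * t * (y : Fin (n+1) → ℝ) j ≠ 0) ∧
    (∀ k, j < k → (1 - s) * g k + s * (1 - t) * (x : Fin (n+1) → ℝ) k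
        + s * t * (y : Fin (n+1) → ℝ) k = 0) := by
  constructor
  · have hgj : 0 < g j := lt_of_le_of_ne (hg.1 j) (Ne.symm hg1)
    have hyj : 0 < (y : Fin (n+1) → ℝ) j := lt_of_le_of_ne (y.2.1 j) (Ne.symm hy1)
    have hxj : 0 ≤ (x : Fin (n+1) → ℝ) j := x.2.1 j
    have h2 : 0 ≤ s * (1 - t) * (x : Fin (n+1) → ℝ) j :=
      mul_nonneg (mul_nonneg hs0 (by linarith)) hxj
    rcases lt_or_eq_of_le hs1 with h | h
    · have h1 : 0 < (1 - s) * g j := mul_pos (by linarith) hgj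
      have h3 : 0 ≤ s * t * (y : Fin (n+1) → ℝ) j :=
        mul_nonneg (mul_nonneg hs0 ht0.le) hyj.le
      exact ne_of_gt (by linarith)
    · have h1 : 0 ≤ (1 - s) * g j := mul_nonneg (by linarith) (hg.1 j)
      have h3 : 0 < s * t * (y : Fin (n+1) → ℝ) j := by
        rw [h]; nlinarith [mul_pos ht0 hyj]
      exact ne_of_gt (by linarith)
  · intro k hk
    rw [hg2 k hk, hx2 k (lt_of_le_of_lt hij hk), hy2 k hk]
    ring

/-- The straight-line path from `x` to `y`. -/
private def lineP {n : ℕ} (x y : stdSimplex ℝ (Fin (n+1))) :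
    C(unitInterval, stdSimplex ℝ (Fin (n+1))) where
  toFun t := ⟨fun k => (1 - (t : ℝ)) * (x : Fin (n+1) → ℝ) k
      + (t : ℝ) * (y : Fin (n+1) → ℝ) k,
    comb_mem x.2 y.2 (by linarith [t.2.2]) t.2.1 (by ring)⟩
  continuous_toFun := by
    apply Continuous.subtype_mk
    apply continuous_pi
    intro k
    have ht : Continuous fun t : unitInterval => (t : ℝ) := continuous_subtype_val
    fun_prop



/-- For `x` in stratum `i`, `y` in stratum `j`, `i ≤ j`, the formula
`h(γ,s)(t) = (1−s)γ(t) + s(1−t)x + s t y` is well defined on the space `E_{x,y}` of exit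
paths from `x` to `y` (for `t > 0` the convex combination lies in `|Δⁿ|` and in the stratum
`j`), and `E_{x,y}` is contractible. -/
theorem stmt_7 (n : ℕ) (i j : Fin (n+1)) (hij : i ≤ j)
    (x y : stdSimplex ℝ (Fin (n+1)))
    (hx : (x : Fin (n+1) → ℝ) i ≠ 0 ∧ ∀ k, i < k → (x : Fin (n+1) → ℝ) k = 0)
    (hy : (y : Fin (n+1) → ℝ) j ≠ 0 ∧ ∀ k, j < k → (y : Fin (n+1) → ℝ) k = 0) :
    (∀ γ : C(unitInterval, stdSimplex ℝ (Fin (n+1))),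
      γ 0 = x → γ 1 = y →
      (∀ t : unitInterval, t ≠ 0 →
        (γ t : Fin (n+1) → ℝ) j ≠ 0 ∧ ∀ k, j < k → (γ t : Fin (n+1) → ℝ) k = 0) →
      ∀ s : ℝ, s ∈ Set.Icc (0:ℝ) 1 → ∀ t : unitInterval, t ≠ 0 →
        (fun k => (1 - s) * (γ t : Fin (n+1) → ℝ) k
            + s * (1 - (t : ℝ)) * (x : Fin (n+1) → ℝ) k
            + s * (t : ℝ) * (y : Fin (n+1) → ℝ) k) ∈ stdSimplex ℝ (Fin (n+1)) ∧
        ((1 - s) * (γ t : Fin (n+1) → ℝ) j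
            + s * (1 - (t : ℝ)) * (x : Fin (n+1) → ℝ) j
            + s * (t : ℝ) * (y : Fin (n+1) → ℝ) j ≠ 0) ∧
        (∀ k, j < k → (1 - s) * (γ t : Fin (n+1) → ℝ) k
            + s * (1 - (t : ℝ)) * (x : Fin (n+1) → ℝ) k
            + s * (t : ℝ) * (y : Fin (n+1) → ℝ) k = 0)) ∧
    ContractibleSpace
      {γ : C(unitInterval, stdSimplex ℝ (Fin (n+1))) //
        γ 0 = x ∧ γ 1 = y ∧ ∀ t : unitInterval, t ≠ 0 →
          (γ t : Fin (n+1) → ℝ) j ≠ 0 ∧ ∀ k, j < k → (γ t : Fin (n+1) → ℝ) k = 0} := by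
  constructor
  · intro γ h0 h1 hstr s hs t ht
    obtain ⟨hg1, hg2⟩ := hstr t ht
    exact ⟨tri_mem hs.1 hs.2 t.2.1 t.2.2 (γ t).2 x y,
      tri_strat hij hx.2 hy.1 hy.2 hs.1 hs.2 (tpos ht) t.2.2 (γ t).2 hg1 hg2⟩
  · set E := {γ : C(unitInterval, stdSimplex ℝ (Fin (n+1))) //
        γ 0 = x ∧ γ 1 = y ∧ ∀ t : unitInterval, t ≠ 0 →
          (γ t : Fin (n+1) → ℝ) j ≠ 0 ∧ ∀ k, j < k → (γ t : Fin (n+1) → ℝ) k = 0}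
      with hE
    -- the line path is in E
    have hline0 : lineP x y 0 = x := Subtype.ext (funext fun k => by
      show (1 - ((0 : unitInterval) : ℝ)) * _ + ((0 : unitInterval) : ℝ) * _ = _
      norm_num; rfl)
    have hline1 : lineP x y 1 = y := Subtype.ext (funext fun k => by
      show (1 - ((1 : unitInterval) : ℝ)) * _ + ((1 : unitInterval) : ℝ) * _ = _
      norm_num; rfl)
    have hlinestr : ∀ t : unitInterval, t ≠ 0 →
        ((lineP x y) t : Fin (n+1) → ℝ) j ≠ 0 ∧
        ∀ k, j < k → ((lineP x y) t : Fin (n+1) → ℝ) k = 0 := by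
      intro t ht
      constructor
      · show (1 - (t : ℝ)) * (x : Fin (n+1) → ℝ) j + (t : ℝ) * (y : Fin (n+1) → ℝ) j ≠ 0
        have h1 : 0 ≤ (1 - (t : ℝ)) * (x : Fin (n+1) → ℝ) j :=
          mul_nonneg (by linarith [t.2.2]) (x.2.1 j)
        have h2 : 0 < (t : ℝ) * (y : Fin (n+1) → ℝ) j :=
          mul_pos (tpos ht) (lt_of_le_of_ne (y.2.1 j) (Ne.symm hy.1))
        exact ne_of_gt (by linarith)
      · intro k hk
        show (1 - (t : ℝ)) * (x : Fin (n+1) → ℝ) k + (t : ℝ) * (y : Fin (n+1) → ℝ) k = 0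
        rw [hx.2 k (lt_of_le_of_lt hij hk), hy.2 k hk]; ring
    have hlE : lineP x y ∈ {γ : C(unitInterval, stdSimplex ℝ (Fin (n+1))) |
        γ 0 = x ∧ γ 1 = y ∧ ∀ t : unitInterval, t ≠ 0 →
          (γ t : Fin (n+1) → ℝ) j ≠ 0 ∧ ∀ k, j < k → (γ t : Fin (n+1) → ℝ) k = 0} :=
      ⟨hline0, hline1, hlinestr⟩
    let ℓE : E := ⟨lineP x y, hlE⟩
    -- the homotopy, curried
    let Hc : C(unitInterval × C(unitInterval, stdSimplex ℝ (Fin (n+1))),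
        C(unitInterval, stdSimplex ℝ (Fin (n+1)))) := (Phi n x y).curry
    have hHc : ∀ (s : unitInterval) (γ : C(unitInterval, stdSimplex ℝ (Fin (n+1))))
        (t : unitInterval) (k : Fin (n+1)),
        ((Hc (s, γ)) t : Fin (n+1) → ℝ) k
          = (1 - (s : ℝ)) * (γ t : Fin (n+1) → ℝ) k
            + (s : ℝ) * (1 - (t : ℝ)) * (x : Fin (n+1) → ℝ) k
            + (s : ℝ) * (t : ℝ) * (y : Fin (n+1) → ℝ) k := fun _ _ _ _ => rfl
    -- Hc maps E to E
    have hmem : ∀ (s : unitInterval) (γ : E),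
        Hc (s, γ.1) ∈ {γ : C(unitInterval, stdSimplex ℝ (Fin (n+1))) |
          γ 0 = x ∧ γ 1 = y ∧ ∀ t : unitInterval, t ≠ 0 →
            (γ t : Fin (n+1) → ℝ) j ≠ 0 ∧ ∀ k, j < k → (γ t : Fin (n+1) → ℝ) k = 0} := by
      rintro s ⟨γ, hγ0, hγ1, hγs⟩
      refine ⟨Subtype.ext (funext fun k => ?_), Subtype.ext (funext fun k => ?_),
        fun t ht => ?_⟩
      · refine (hHc _ _ _ _).trans ?_
        have h0 : (γ 0 : Fin (n+1) → ℝ) k = (x : Fin (n+1) → ℝ) k := by rw [hγ0]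
        rw [h0]
        show (1 - (s : ℝ)) * _ + (s : ℝ) * (1 - ((0 : unitInterval) : ℝ)) * _
            + (s : ℝ) * ((0 : unitInterval) : ℝ) * _ = _
        norm_num
        ring
        rfl
      · refine (hHc _ _ _ _).trans ?_
        have h1 : (γ 1 : Fin (n+1) → ℝ) k = (y : Fin (n+1) → ℝ) k := by rw [hγ1]
        rw [h1]
        show (1 - (s : ℝ)) * _ + (s : ℝ) * (1 - ((1 : unitInterval) : ℝ)) * _
            + (s : ℝ) * ((1 : unitInterval) : ℝ) * _ = _
        norm_num; ring; rfl
      · obtain ⟨hg1, hg2⟩ := hγs t ht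
        have := tri_strat hij hx.2 hy.1 hy.2 s.2.1 s.2.2 (tpos ht) t.2.2 (γ t).2 hg1 hg2
        constructor
        · rw [hHc]; exact this.1
        · intro k hk; rw [hHc]; exact this.2 k hk
    -- the homotopy on E
    let HE : C(unitInterval × E, E) :=
      ⟨fun p => ⟨Hc (p.1, p.2.1), hmem p.1 p.2⟩,
        (Hc.continuous.comp
          (continuous_fst.prodMk (continuous_subtype_val.comp continuous_snd))).subtype_mk _⟩
    have hcontr : (ContinuousMap.id E).Nullhomotopic := by
      refine ⟨ℓE, ⟨⟨HE, fun γ => ?_, fun γ => ?_⟩⟩⟩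
      · show (⟨Hc (0, γ.1), _⟩ : E) = γ
        refine Subtype.ext (ContinuousMap.ext fun t => Subtype.ext (funext fun k => ?_))
        refine (hHc _ _ _ _).trans ?_
        show (1 - ((0 : unitInterval) : ℝ)) * _ + ((0 : unitInterval) : ℝ) * _ * _
            + ((0 : unitInterval) : ℝ) * _ * _ = _
        norm_num
        rfl
      · show (⟨Hc (1, γ.1), _⟩ : E) = ℓE
        refine Subtype.ext (ContinuousMap.ext fun t => Subtype.ext (funext fun k => ?_))
        refine (hHc _ _ _ _).trans ?_
        show (1 - ((1 : unitInterval) : ℝ)) * _ + ((1 : unitInterval) : ℝ) * _ * _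
            + ((1 : unitInterval) : ℝ) * _ * _
          = (1 - (t : ℝ)) * (x : Fin (n+1) → ℝ) k + (t : ℝ) * (y : Fin (n+1) → ℝ) k
        norm_num
    exact (contractible_iff_id_nullhomotopic E).2 hcontr
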